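/- Consider the state-based algorithm with parameters (ω, φ) and decidable predicate R, started at s₀ = λn.none. If ω and φ are continuous, i.e., for every state s there exists L ∈ ℕ such that every state s' with s↾L = s'↾L satisfies ω(s') = ω(s) and φ(s') = φ(s), then the algorithm terminates after a finite number of steps: there is no infinite run s₀, s₁, s₂, … in which every state has a successor. -/
import Mathlib


-- A state is a function `ℕ → Option ℕ`; `s n = none` means `xₙ ∈ M[s]`, and
-- `s n = some p` means `xₙ ∉ M[s]` with recorded evidence `f[s](n) = p`.

/-- The finite set `M[s]↾n = M[s] ∩ {x_m | m < n}`. -/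
def StateSeg {X : Type*} [DecidableEq X] (x : ℕ → X) (s : ℕ → Option ℕ) (n : ℕ) : Finset X :=
  ((Finset.range n).filter fun m => s m = none).image x

instance decExistsLE (N : ℕ) (p : ℕ → Prop) [DecidablePred p] :
    Decidable (∃ m, m ≤ N ∧ p m) :=
  decidable_of_iff (∃ m, m < N + 1 ∧ p m) (by simp [Nat.lt_succ_iff])

/-- One step of the algorithm with parameters `(ω, φ)` and predicate `R`:
search for the least `n ≤ ω s` with `xₙ ∈ M[s]` and `¬R(M[s]↾n ∪ {xₙ}, φ s)`;
if none exists the state is final (the step returns `s` itself), otherwise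
keep `s` below `n`, record `φ s` at `n`, and put everything above `n` back into `M`. -/
def StateStep {X : Type*} [DecidableEq X] (x : ℕ → X) (R : Finset X → ℕ → Prop)
    [∀ A p, Decidable (R A p)] (ω φ : (ℕ → Option ℕ) → ℕ)
    (s : ℕ → Option ℕ) : ℕ → Option ℕ :=
  if h : ∃ m, m ≤ ω s ∧ s m = none ∧ ¬ R (StateSeg x s m ∪ {x m}) (φ s) then
    fun k => if k < Nat.find h then s k else if k = Nat.find h then some (φ s) else none
  else s

/-- The run of the algorithm started at the initial state `s₀ = λn.none`. -/
def StateRun {X : Type*} [DecidableEq X] (x : ℕ → X) (R : Finset X → ℕ → Prop)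
    [∀ A p, Decidable (R A p)] (ω φ : (ℕ → Option ℕ) → ℕ) : ℕ → ℕ → Option ℕ
  | 0 => fun _ => none
  | i + 1 => StateStep x R ω φ (StateRun x R ω φ i)

/-- A state is final (the algorithm terminates in it) if the search fails. -/
def StateFinal {X : Type*} [DecidableEq X] (x : ℕ → X) (R : Finset X → ℕ → Prop)
    (ω φ : (ℕ → Option ℕ) → ℕ) (s : ℕ → Option ℕ) : Prop :=
  ¬ ∃ m, m ≤ ω s ∧ s m = none ∧ ¬ R (StateSeg x s m ∪ {x m}) (φ s)

/-- If `(ω, φ)` are continuous, then the algorithm terminates after finitely many steps: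
some state of the run is final. -/
theorem stmt11 {X : Type*} [DecidableEq X] (x : ℕ → X) (R : Finset X → ℕ → Prop)
    [∀ A p, Decidable (R A p)] (ω φ : (ℕ → Option ℕ) → ℕ)
    (hcont : ∀ s : ℕ → Option ℕ, ∃ L : ℕ, ∀ s' : ℕ → Option ℕ,
      (∀ k < L, s k = s' k) → ω s' = ω s ∧ φ s' = φ s) :
    ∃ j : ℕ, StateFinal x R ω φ (StateRun x R ω φ j) := by
  by_contra hfin
  push_neg at hfin
  set s := StateRun x R ω φ with hs
  have h : ∀ i, ∃ m, m ≤ ω (s i) ∧ s i m = none ∧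
      ¬ R (StateSeg x (s i) m ∪ {x m}) (φ (s i)) := by
    intro i
    have := hfin i
    rw [StateFinal] at this
    exact not_not.mp this
  obtain ⟨n, hmain⟩ : ∃ n : ℕ → ℕ, ∀ i, n i ≤ ω (s i) ∧ s i (n i) = none ∧
      (∀ m, s (i+1) m =
        if m < n i then s i m else if m = n i then some (φ (s i)) else none) := by
    refine ⟨fun i => Nat.find (h i), fun i =>
      ⟨(Nat.find_spec (h i)).1, (Nat.find_spec (h i)).2.1, ?_⟩⟩
    intro m
    show StateStep x R ω φ (s i) m = _
    rw [StateStep, dif_pos (h i)]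
  -- each chosen index eventually exceeds any bound
  have stab : ∀ k, ∃ I, ∀ i, I ≤ i → k ≤ n i := by
    intro k
    induction k with
    | zero => exact ⟨0, fun i _ => Nat.zero_le _⟩
    | succ k ih =>
      obtain ⟨I, hI⟩ := ih
      by_cases hex : ∃ i₀, I ≤ i₀ ∧ n i₀ = k
      · obtain ⟨i₀, hi₀, hni₀⟩ := hex
        have hsome : ∀ i, i₀ + 1 ≤ i → s i k ≠ none := by
          intro i hi
          induction i with
          | zero => omega
          | succ j ihj =>
            rcases Nat.lt_or_ge j (i₀ + 1) with hj | hj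
            · have hj' : j = i₀ := by omega
              subst hj'
              rw [(hmain j).2.2 k, hni₀]
              simp
            · have hjk := ihj hj
              have h1 : k ≤ n j := hI j (by omega)
              have h2 : n j ≠ k := by
                intro hh
                exact hjk (hh ▸ (hmain j).2.1)
              rw [(hmain j).2.2 k, if_pos (by omega)]
              exact hjk
        refine ⟨i₀ + 1, fun i hi => ?_⟩
        have h1 : k ≤ n i := hI i (by omega)
        have h2 : n i ≠ k := fun hh => hsome i hi (hh ▸ (hmain i).2.1)
        omega
      · push_neg at hex
        refine ⟨I, fun i hi => ?_⟩
        have h1 := hI i hi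
        have h2 := hex i hi
        omega
  -- prefixes stabilize once the indices stay large
  have hagree : ∀ k I, (∀ i, I ≤ i → k ≤ n i) →
      ∀ i, I ≤ i → ∀ m, m < k → s i m = s I m := by
    intro k I hI i hi
    induction i, hi using Nat.le_induction with
    | base => intro m _; rfl
    | succ j hj ihj =>
      intro m hm
      rw [(hmain j).2.2 m, if_pos (lt_of_lt_of_le hm (hI j hj))]
      exact ihj m hm
  choose I hI using stab
  set sinf : ℕ → Option ℕ := fun m => s (I (m + 1)) m with hsinf
  have heq : ∀ m i, I (m + 1) ≤ i → s i m = sinf m := by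
    intro m i hi
    exact hagree (m + 1) (I (m + 1)) (hI (m + 1)) i hi m (Nat.lt_succ_self m)
  obtain ⟨L, hL⟩ := hcont sinf
  set J := Finset.sup (Finset.range L) (fun m => I (m + 1)) with hJ
  set K := ω sinf + 1 with hK
  set i₀ := max J (I K) with hi₀
  have h1 : ∀ m < L, sinf m = s i₀ m := by
    intro m hm
    have hm1 : I (m + 1) ≤ J :=
      Finset.le_sup (f := fun m => I (m + 1)) (Finset.mem_range.mpr hm)
    exact (heq m i₀ (le_trans hm1 (le_max_left J (I K)))).symm
  have h2 : ω (s i₀) = ω sinf := (hL (s i₀) h1).1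
  have h3 : K ≤ n i₀ := hI K i₀ (le_max_right _ _)
  have h4 : n i₀ ≤ ω (s i₀) := (hmain i₀).1
  omega
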